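/- arXiv:math-ph/0307027 — 2 statements merged into one kernel-verified Lean document; each statement's English description precedes it below -/
import Mathlib

section
/- Vorticity transport for an unsteady incompressible complex fluid: let B ⊆ ℝ³ be open, ρ₀ > 0 a constant, ι = 1/ρ₀, and let v : ℝ × B → ℝ³, p : ℝ × B → ℝ, E : ℝ × B → ℝ^{3×3} be smooth time-dependent fields with div v(t,·) = 0 for every t. If the momentum balance ρ₀(∂_t v + (Dv)v) = div(−p I − E) holds (all spatial differential operators taken in x at each fixed t), then the vorticity ω = curl v satisfies, at every point: ∂_t ω + (v·grad)ω = (ω·grad)v − ι curl(div E). -/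
noncomputable section

/-- Points of ℝ³. -/
abbrev V3 : Type := Fin 3 → ℝ

/-- Partial derivative ∂ᵢ of a scalar field on ℝ³. -/
def pd (i : Fin 3) (f : V3 → ℝ) (x : V3) : ℝ :=
  fderiv ℝ f x (Pi.single i 1)

/-- Cross product on ℝ³. -/
def cross (a b : V3) : V3 :=
  ![a 1 * b 2 - a 2 * b 1,
    a 2 * b 0 - a 0 * b 2,
    a 0 * b 1 - a 1 * b 0]

/-- Curl of a vector field on ℝ³. -/
def curl (u : V3 → V3) (x : V3) : V3 :=
  ![pd 1 (fun y => u y 2) x - pd 2 (fun y => u y 1) x,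
    pd 2 (fun y => u y 0) x - pd 0 (fun y => u y 2) x,
    pd 0 (fun y => u y 1) x - pd 1 (fun y => u y 0) x]

/-- spatial basis direction in ℝ × V3 -/
def eb (j : Fin 3) : ℝ × V3 := ((0:ℝ), Pi.single j 1)

def et : ℝ × V3 := ((1:ℝ), 0)

section Aux

variable {B : Set V3} (hB : IsOpen B) {u : ℝ × V3 → ℝ}
  (hu : ContDiffOn ℝ (⊤ : ℕ∞) u (Set.univ ×ˢ B)) {t : ℝ} {x : V3} (hx : x ∈ B)

lemma memU (s : ℝ) {y : V3} (hy : y ∈ B) : (s, y) ∈ (Set.univ ×ˢ B : Set (ℝ × V3)) :=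
  ⟨trivial, hy⟩

include hB hu hx in
lemma diffAt : DifferentiableAt ℝ u (t, x) :=
  ((hu.contDiffAt ((isOpen_univ.prod hB).mem_nhds (memU t hx))).differentiableAt
    (by simp))

include hB hu hx in
lemma diffAt_fderiv (w : ℝ × V3) :
    DifferentiableAt ℝ (fun z' => fderiv ℝ u z' w) (t, x) := by
  have h1 : ContDiffOn ℝ (⊤ : ℕ∞) (fun z' => fderiv ℝ u z' : ℝ × V3 → (ℝ × V3) →L[ℝ] ℝ)
      (Set.univ ×ˢ B) := hu.fderiv_of_isOpen (isOpen_univ.prod hB) (by exact_mod_cast le_top)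
  have h2 : DifferentiableAt ℝ (fun z' => fderiv ℝ u z') (t, x) :=
    ((h1.contDiffAt ((isOpen_univ.prod hB).mem_nhds (memU t hx))).differentiableAt
      (by simp))
  exact (ContinuousLinearMap.apply ℝ ℝ w).differentiableAt.comp _ h2

lemma pd_eq {t : ℝ} {x : V3} (h : DifferentiableAt ℝ u (t, x)) (j : Fin 3) :
    pd j (fun y => u (t, y)) x = fderiv ℝ u (t, x) (eb j) := by
  have hc : HasFDerivAt (fun y : V3 => u (t, y))
      ((fderiv ℝ u (t, x)).comp (ContinuousLinearMap.inr ℝ ℝ V3)) x :=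
    h.hasFDerivAt.comp x (hasFDerivAt_prodMk_right t x)
  rw [pd, hc.fderiv]; rfl

lemma derivt_eq {t : ℝ} {x : V3} (h : DifferentiableAt ℝ u (t, x)) :
    deriv (fun s => u (s, x)) t = fderiv ℝ u (t, x) et := by
  have hc : HasFDerivAt (fun s : ℝ => u (s, x))
      ((fderiv ℝ u (t, x)).comp (ContinuousLinearMap.inl ℝ ℝ V3)) t :=
    h.hasFDerivAt.comp t (hasFDerivAt_prodMk_left t x)
  rw [hc.hasDerivAt.deriv]; rfl

include hB hu hx in
lemma deriv_pd (a : Fin 3) :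
    deriv (fun s => pd a (fun y => u (s, y)) x) t
      = fderiv ℝ (fun z' => fderiv ℝ u z' (eb a)) (t, x) et := by
  have h1 : (fun s => pd a (fun y => u (s, y)) x)
      = fun s => (fun z' => fderiv ℝ u z' (eb a)) (s, x) := by
    funext s
    exact pd_eq (diffAt hB hu hx (t := s)) a
  rw [h1]
  exact derivt_eq (diffAt_fderiv hB hu hx (eb a))

include hB hx in
lemma pd_congr {g₁ g₂ : V3 → ℝ} (h : ∀ y ∈ B, g₁ y = g₂ y) (j : Fin 3) :
    pd j g₁ x = pd j g₂ x := by
  have : g₁ =ᶠ[nhds x] g₂ := by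
    filter_upwards [hB.mem_nhds hx] with y hy using h y hy
  rw [pd, pd, this.fderiv_eq]

include hB hu hx in
lemma pd_pd (a j : Fin 3) :
    pd j (fun y => pd a (fun w => u (t, w)) y) x
      = fderiv ℝ (fun z' => fderiv ℝ u z' (eb a)) (t, x) (eb j) := by
  have h1 : ∀ y ∈ B, pd a (fun w => u (t, w)) y
      = (fun z' => fderiv ℝ u z' (eb a)) (t, y) := fun y hy =>
    pd_eq (diffAt hB hu hy) a
  rw [pd_congr hB hx h1 j]
  exact pd_eq (diffAt_fderiv hB hu hx (eb a)) j

include hB hu hx in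
lemma swapD2 (w₁ w₂ : ℝ × V3) :
    fderiv ℝ (fun z' => fderiv ℝ u z' w₂) (t, x) w₁
      = fderiv ℝ (fun z' => fderiv ℝ u z' w₁) (t, x) w₂ := by
  have hca : ContDiffAt ℝ (⊤ : ℕ∞) u (t, x) :=
    hu.contDiffAt ((isOpen_univ.prod hB).mem_nhds (memU t hx))
  have hsym : IsSymmSndFDerivAt ℝ u (t, x) :=
    hca.isSymmSndFDerivAt (by rw [minSmoothness_of_isRCLikeNormedField]; exact WithTop.coe_le_coe.mpr le_top)
  have h1 : ContDiffOn ℝ (⊤ : ℕ∞) (fun z' => fderiv ℝ u z' : ℝ × V3 → (ℝ × V3) →L[ℝ] ℝ)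
      (Set.univ ×ˢ B) := hu.fderiv_of_isOpen (isOpen_univ.prod hB) (by exact_mod_cast le_top)
  have h2 : DifferentiableAt ℝ (fun z' => fderiv ℝ u z') (t, x) :=
    ((h1.contDiffAt ((isOpen_univ.prod hB).mem_nhds (memU t hx))).differentiableAt
      (by simp))
  have key : ∀ w : ℝ × V3, fderiv ℝ (fun z' => fderiv ℝ u z' w) (t, x)
      = (fderiv ℝ (fderiv ℝ u) (t, x)).flip w := by
    intro w
    have := fderiv_clm_apply (c := fderiv ℝ u) (u := fun _ : ℝ × V3 => w) h2
      (differentiableAt_const w)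
    simp only [fderiv_fun_const] at this
    simpa using this
  rw [key w₂, key w₁]
  simpa using hsym w₁ w₂

end Aux
section Aux2

variable {B : Set V3} (hB : IsOpen B) {u u₁ u₂ : ℝ × V3 → ℝ}
  (hu : ContDiffOn ℝ (⊤ : ℕ∞) u (Set.univ ×ˢ B))
  (hu₁ : ContDiffOn ℝ (⊤ : ℕ∞) u₁ (Set.univ ×ˢ B))
  (hu₂ : ContDiffOn ℝ (⊤ : ℕ∞) u₂ (Set.univ ×ˢ B))
  {t : ℝ} {x : V3} (hx : x ∈ B)

include hB hu hx in
lemma diffAt_fderiv_t (w : ℝ × V3) :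
    DifferentiableAt ℝ (fun s => fderiv ℝ u (s, x) w) t :=
  (diffAt_fderiv hB hu hx w).comp (f := fun s : ℝ => (s, x)) t (differentiableAt_id.prodMk (differentiableAt_const x))

include hB hu hx in
lemma diffAt_pd_t (a : Fin 3) :
    DifferentiableAt ℝ (fun s => pd a (fun y => u (s, y)) x) t := by
  have h1 : (fun s => pd a (fun y => u (s, y)) x)
      = fun s => fderiv ℝ u (s, x) (eb a) := funext fun s => pd_eq (diffAt hB hu hx) a
  rw [h1]; exact diffAt_fderiv_t hB hu hx (eb a)

include hB hu hx in
lemma diffAt_fderiv_x (w : ℝ × V3) :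
    DifferentiableAt ℝ (fun y => fderiv ℝ u (t, y) w) x :=
  (diffAt_fderiv hB hu hx w).comp x ((differentiableAt_const t).prodMk differentiableAt_id)

include hB hu₁ hu₂ hx in
lemma deriv_curlcomp (a b : Fin 3) :
    deriv (fun s => pd a (fun y => u₁ (s, y)) x - pd b (fun y => u₂ (s, y)) x) t
      = fderiv ℝ (fun z' => fderiv ℝ u₁ z' (eb a)) (t, x) et
        - fderiv ℝ (fun z' => fderiv ℝ u₂ z' (eb b)) (t, x) et := by
  rw [deriv_fun_sub (diffAt_pd_t hB hu₁ hx a) (diffAt_pd_t hB hu₂ hx b),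
    deriv_pd hB hu₁ hx a, deriv_pd hB hu₂ hx b]

include hB hu₁ hu₂ hx in
lemma pd_curlcomp (a b j : Fin 3) :
    pd j (fun y => pd a (fun w => u₁ (t, w)) y - pd b (fun w => u₂ (t, w)) y) x
      = fderiv ℝ (fun z' => fderiv ℝ u₁ z' (eb a)) (t, x) (eb j)
        - fderiv ℝ (fun z' => fderiv ℝ u₂ z' (eb b)) (t, x) (eb j) := by
  have h1 : ∀ y ∈ B, pd a (fun w => u₁ (t, w)) y - pd b (fun w => u₂ (t, w)) y
      = fderiv ℝ u₁ (t, y) (eb a) - fderiv ℝ u₂ (t, y) (eb b) := by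
    intro y hy
    rw [pd_eq (diffAt hB hu₁ hy) a, pd_eq (diffAt hB hu₂ hy) b]
  rw [pd_congr hB hx h1 j, pd, fderiv_fun_sub (diffAt_fderiv_x hB hu₁ hx (eb a))
      (diffAt_fderiv_x hB hu₂ hx (eb b))]
  simp only [ContinuousLinearMap.sub_apply]
  rw [← pd, ← pd, pd_eq (diffAt_fderiv hB hu₁ hx (eb a)) j,
    pd_eq (diffAt_fderiv hB hu₂ hx (eb b)) j]

include hB hx in
lemma pd_divcomp {e : Fin 3 → ℝ × V3 → ℝ}
    (he : ∀ j, ContDiffOn ℝ (⊤ : ℕ∞) (e j) (Set.univ ×ˢ B)) (a : Fin 3) :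
    pd a (fun y => ∑ j, pd j (fun w => e j (t, w)) y) x
      = ∑ j, fderiv ℝ (fun z' => fderiv ℝ (e j) z' (eb j)) (t, x) (eb a) := by
  have h1 : ∀ y ∈ B, (∑ j, pd j (fun w => e j (t, w)) y)
      = ∑ j, fderiv ℝ (e j) (t, y) (eb j) := by
    intro y hy
    exact Finset.sum_congr rfl fun j _ => pd_eq (diffAt hB (he j) hy) j
  rw [pd_congr hB hx h1 a, pd,
    fderiv_fun_sum (fun j _ => diffAt_fderiv_x hB (he j) hx (eb j))]
  simp only [ContinuousLinearMap.sum_apply]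
  exact Finset.sum_congr rfl fun j _ => by
    rw [← pd, pd_eq (diffAt_fderiv hB (he j) hx (eb j)) a]

end Aux2

set_option maxHeartbeats 1000000 in
/-- vorticity transport for an unsteady incompressible complex
fluid. If `div v(t,·) = 0` and the momentum balance
`ρ₀(∂_t v + (Dv)v) = div(−p I − E)` holds on `B`, then the vorticity
`ω = curl v` satisfies `∂_t ω + (v·grad)ω = (ω·grad)v − ι curl(div E)`
(componentwise) at every point, where `ι = 1/ρ₀`. -/
theorem unsteady_vorticity_transport
    (B : Set V3) (hB : IsOpen B)
    (ρ₀ : ℝ) (hρ₀ : 0 < ρ₀) (ι : ℝ) (hι : ι = 1 / ρ₀)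
    (v : ℝ × V3 → V3) (p : ℝ × V3 → ℝ) (E : ℝ × V3 → Fin 3 → Fin 3 → ℝ)
    (hv : ContDiffOn ℝ (⊤ : ℕ∞) v (Set.univ ×ˢ B))
    (hp : ContDiffOn ℝ (⊤ : ℕ∞) p (Set.univ ×ˢ B))
    (hE : ContDiffOn ℝ (⊤ : ℕ∞) E (Set.univ ×ˢ B))
    (hincomp : ∀ t : ℝ, ∀ x ∈ B, (∑ j, pd j (fun y => v (t, y) j) x) = 0)
    (balance : ∀ t : ℝ, ∀ x ∈ B, ∀ i : Fin 3,
      ρ₀ * (deriv (fun s => v (s, x) i) t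
              + ∑ j, pd j (fun y => v (t, y) i) x * v (t, x) j)
        = ∑ j, pd j (fun y => -(p (t, y)) * (if i = j then (1:ℝ) else 0) - E (t, y) i j) x) :
    ∀ t : ℝ, ∀ x ∈ B, ∀ i : Fin 3,
      deriv (fun s => curl (fun y => v (s, y)) x i) t
        + (∑ j, v (t, x) j * pd j (fun y => curl (fun w => v (t, w)) y i) x)
      = (∑ j, curl (fun y => v (t, y)) x j * pd j (fun y => v (t, y) i) x)
        - ι * curl (fun y => fun i' => ∑ j, pd j (fun w => E (t, w) i' j) y) x i := by
  intro t x hx i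
  have hF : ∀ k : Fin 3, ContDiffOn ℝ (⊤ : ℕ∞) (fun z => v z k) (Set.univ ×ˢ B) :=
    fun k => (ContinuousLinearMap.proj k : V3 →L[ℝ] ℝ).contDiff.comp_contDiffOn hv
  have hG : ∀ k j : Fin 3, ContDiffOn ℝ (⊤ : ℕ∞) (fun z => E z k j) (Set.univ ×ˢ B) := by
    intro k j
    exact (ContinuousLinearMap.proj j : V3 →L[ℝ] ℝ).contDiff.comp_contDiffOn
      ((ContinuousLinearMap.proj k :
        (Fin 3 → Fin 3 → ℝ) →L[ℝ] (Fin 3 → ℝ)).contDiff.comp_contDiffOn hE)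
  -- first-derivative atoms
  have hA : ∀ c j : Fin 3, pd j (fun y => v (t, y) c) x
      = fderiv ℝ (fun z => v z c) (t, x) (eb j) :=
    fun c j => pd_eq (diffAt hB (hF c) hx) j
  -- swaps
  have hsw : ∀ (c : Fin 3) (w₁ w₂ : ℝ × V3),
      fderiv ℝ (fun z' => fderiv ℝ (fun z => v z c) z' w₂) (t, x) w₁
        = fderiv ℝ (fun z' => fderiv ℝ (fun z => v z c) z' w₁) (t, x) w₂ :=
    fun c w₁ w₂ => swapD2 hB (hF c) hx w₁ w₂
  have hswp : ∀ (w₁ w₂ : ℝ × V3),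
      fderiv ℝ (fun z' => fderiv ℝ p z' w₂) (t, x) w₁
        = fderiv ℝ (fun z' => fderiv ℝ p z' w₁) (t, x) w₂ :=
    fun w₁ w₂ => swapD2 hB hp hx w₁ w₂
  -- incompressibility at the point
  have hdiv : (∑ j : Fin 3, fderiv ℝ (fun z => v z j) (t, x) (eb j)) = 0 := by
    rw [← hincomp t x hx]
    exact (Finset.sum_congr rfl fun j _ => (hA j j).symm)
  -- differentiated momentum balance
  have hdb : ∀ c a : Fin 3,
      ρ₀ * (fderiv ℝ (fun z' => fderiv ℝ (fun z => v z c) z' et) (t, x) (eb a)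
        + ∑ j, (fderiv ℝ (fun z => v z c) (t, x) (eb j)
                  * fderiv ℝ (fun z => v z j) (t, x) (eb a)
                + v (t, x) j
                  * fderiv ℝ (fun z' => fderiv ℝ (fun z => v z c) z' (eb j)) (t, x) (eb a)))
      = ∑ j, ((if c = j then (1:ℝ) else 0)
                * (-(fderiv ℝ (fun z' => fderiv ℝ p z' (eb j)) (t, x) (eb a)))
              - fderiv ℝ (fun z' => fderiv ℝ (fun z => E z c j) z' (eb j)) (t, x) (eb a)) := by
    intro c a
    set L : ℝ × V3 → ℝ := fun z' => ρ₀ * (fderiv ℝ (fun z => v z c) z' et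
        + ∑ j, fderiv ℝ (fun z => v z c) z' (eb j) * v z' j) with hLdef
    set R : ℝ × V3 → ℝ := fun z' => ∑ j, ((if c = j then (1:ℝ) else 0)
        * (-(fderiv ℝ p z' (eb j))) - fderiv ℝ (fun z => E z c j) z' (eb j)) with hRdef
    have heq : ∀ z' ∈ (Set.univ ×ˢ B : Set (ℝ × V3)), L z' = R z' := by
      rintro ⟨s, y⟩ ⟨-, hy⟩
      have hb := balance s y hy c
      have hdt : deriv (fun s' => v (s', y) c) s = fderiv ℝ (fun z => v z c) (s, y) et :=
        derivt_eq (diffAt hB (hF c) hy)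
      have hpdv : ∀ j : Fin 3, pd j (fun y' => v (s, y') c) y
          = fderiv ℝ (fun z => v z c) (s, y) (eb j) :=
        fun j => pd_eq (diffAt hB (hF c) hy) j
      have hrhs : ∀ j : Fin 3,
          pd j (fun y' => -(p (s, y')) * (if c = j then (1:ℝ) else 0) - E (s, y') c j) y
          = (if c = j then (1:ℝ) else 0) * (-(fderiv ℝ p (s, y) (eb j)))
            - fderiv ℝ (fun z => E z c j) (s, y) (eb j) := by
        intro j
        have hH : HasFDerivAt (fun z : ℝ × V3 => -(p z) * (if c = j then (1:ℝ) else 0)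
              - E z c j)
            ((if c = j then (1:ℝ) else 0) • (-(fderiv ℝ p (s, y)))
              - fderiv ℝ (fun z => E z c j) (s, y)) (s, y) :=
          (((diffAt hB hp hy).hasFDerivAt.neg).mul_const _).sub
            (diffAt hB (hG c j) hy).hasFDerivAt
        rw [pd_eq hH.differentiableAt j, hH.fderiv]
        simp [smul_eq_mul, apply_ite (fun φ : (ℝ × V3) →L[ℝ] ℝ => φ (eb j))]
      rw [hdt] at hb
      simp only [hpdv, hrhs] at hb
      simpa [hLdef, hRdef] using hb
    have hfd : fderiv ℝ L (t, x) = fderiv ℝ R (t, x) := by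
      apply Filter.EventuallyEq.fderiv_eq
      filter_upwards [(isOpen_univ.prod hB).mem_nhds (memU t hx)] with z' hz' using heq z' hz'
    have happ : fderiv ℝ L (t, x) (eb a) = fderiv ℝ R (t, x) (eb a) := by rw [hfd]
    have hHL : HasFDerivAt L
        (ρ₀ • ((fderiv ℝ (fun z' => fderiv ℝ (fun z => v z c) z' et) (t, x))
          + ∑ j : Fin 3,
            (fderiv ℝ (fun z => v z c) (t, x) (eb j) • fderiv ℝ (fun z => v z j) (t, x)
              + v (t, x) j
                • fderiv ℝ (fun z' => fderiv ℝ (fun z => v z c) z' (eb j)) (t, x)))) (t, x) :=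
      HasFDerivAt.const_mul
        ((diffAt_fderiv hB (hF c) hx et).hasFDerivAt.add
          (HasFDerivAt.fun_sum fun j _ => (diffAt_fderiv hB (hF c) hx (eb j)).hasFDerivAt.mul
            (diffAt hB (hF j) hx).hasFDerivAt)) ρ₀
    have hHR : HasFDerivAt R
        (∑ j : Fin 3, ((if c = j then (1:ℝ) else 0)
            • (-(fderiv ℝ (fun z' => fderiv ℝ p z' (eb j)) (t, x)))
          - fderiv ℝ (fun z' => fderiv ℝ (fun z => E z c j) z' (eb j)) (t, x))) (t, x) :=
      HasFDerivAt.fun_sum fun j _ =>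
        (((diffAt_fderiv hB hp hx (eb j)).hasFDerivAt.neg).const_mul _).sub
          (diffAt_fderiv hB (hG c j) hx (eb j)).hasFDerivAt
    rw [hHL.fderiv, hHR.fderiv] at happ
    simpa [ContinuousLinearMap.sum_apply, mul_comm, smul_eq_mul, mul_add, Finset.mul_sum]
      using happ
  have hne : ρ₀ ≠ 0 := ne_of_gt hρ₀
  have hdbι : ∀ c a : Fin 3,
      fderiv ℝ (fun z' => fderiv ℝ (fun z => v z c) z' et) (t, x) (eb a)
        + ∑ j, (fderiv ℝ (fun z => v z c) (t, x) (eb j)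
                  * fderiv ℝ (fun z => v z j) (t, x) (eb a)
                + v (t, x) j
                  * fderiv ℝ (fun z' => fderiv ℝ (fun z => v z c) z' (eb j)) (t, x) (eb a))
      = ι * ∑ j, ((if c = j then (1:ℝ) else 0)
                * (-(fderiv ℝ (fun z' => fderiv ℝ p z' (eb j)) (t, x) (eb a)))
              - fderiv ℝ (fun z' => fderiv ℝ (fun z => E z c j) z' (eb j)) (t, x) (eb a)) := by
    intro c a
    rw [hι, div_mul_eq_mul_div, one_mul, eq_div_iff hne]
    linear_combination hdb c a
  clear hdb
  fin_cases i
  · -- component 0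
    have hd : deriv (fun s => curl (fun y => v (s, y)) x 0) t
        = fderiv ℝ (fun z' => fderiv ℝ (fun z => v z 2) z' (eb 1)) (t, x) et
          - fderiv ℝ (fun z' => fderiv ℝ (fun z => v z 1) z' (eb 2)) (t, x) et := by
      have h1 : (fun s => curl (fun y => v (s, y)) x 0)
          = fun s => pd 1 (fun y => v (s, y) 2) x - pd 2 (fun y => v (s, y) 1) x := by
        funext s; simp [curl]
      rw [h1]
      exact deriv_curlcomp hB (hF 2) (hF 1) hx 1 2
    have htr : ∀ j : Fin 3, pd j (fun y => curl (fun w => v (t, w)) y 0) x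
        = fderiv ℝ (fun z' => fderiv ℝ (fun z => v z 2) z' (eb 1)) (t, x) (eb j)
          - fderiv ℝ (fun z' => fderiv ℝ (fun z => v z 1) z' (eb 2)) (t, x) (eb j) := by
      intro j
      have h1 : (fun y => curl (fun w => v (t, w)) y 0)
          = fun y => pd 1 (fun w => v (t, w) 2) y - pd 2 (fun w => v (t, w) 1) y := by
        funext y; simp [curl]
      rw [h1]
      exact pd_curlcomp hB (hF 2) (hF 1) hx 1 2 j
    have hE1 : pd 1 (fun y => ∑ j, pd j (fun w => E (t, w) 2 j) y) x
        = ∑ j, fderiv ℝ (fun z' => fderiv ℝ (fun z => E z 2 j) z' (eb j)) (t, x) (eb 1) :=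
      pd_divcomp hB hx (fun j => hG 2 j) 1
    have hE2 : pd 2 (fun y => ∑ j, pd j (fun w => E (t, w) 1 j) y) x
        = ∑ j, fderiv ℝ (fun z' => fderiv ℝ (fun z => E z 1 j) z' (eb j)) (t, x) (eb 2) :=
      pd_divcomp hB hx (fun j => hG 1 j) 2
    have hEc : curl (fun y => fun i' => ∑ j, pd j (fun w => E (t, w) i' j) y) x 0
        = (∑ j, fderiv ℝ (fun z' => fderiv ℝ (fun z => E z 2 j) z' (eb j)) (t, x) (eb 1))
          - ∑ j, fderiv ℝ (fun z' => fderiv ℝ (fun z => E z 1 j) z' (eb j)) (t, x) (eb 2) := by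
      have h1 : curl (fun y => fun i' => ∑ j, pd j (fun w => E (t, w) i' j) y) x 0
          = pd 1 (fun y => ∑ j, pd j (fun w => E (t, w) 2 j) y) x
            - pd 2 (fun y => ∑ j, pd j (fun w => E (t, w) 1 j) y) x := by
        simp [curl]
      rw [h1, hE1, hE2]
    have hc0 : curl (fun y => v (t, y)) x 0
        = fderiv ℝ (fun z => v z 2) (t, x) (eb 1) - fderiv ℝ (fun z => v z 1) (t, x) (eb 2) := by
      simp only [curl, Matrix.cons_val_zero]; rw [hA 2 1, hA 1 2]
    have hc1 : curl (fun y => v (t, y)) x 1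
        = fderiv ℝ (fun z => v z 0) (t, x) (eb 2) - fderiv ℝ (fun z => v z 2) (t, x) (eb 0) := by
      simp only [curl, Matrix.cons_val_one, Matrix.head_cons, Matrix.cons_val_zero]; rw [hA 0 2, hA 2 0]
    have hc2 : curl (fun y => v (t, y)) x 2
        = fderiv ℝ (fun z => v z 1) (t, x) (eb 0) - fderiv ℝ (fun z => v z 0) (t, x) (eb 1) := by
      simp only [curl]; rw [show ((2:Fin 3)) = 2 from rfl]
      simp only [Matrix.cons_val_two, Matrix.tail_cons, Matrix.head_cons]
      rw [hA 1 0, hA 0 1]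
    simp only [Fin.zero_eta]
    rw [hEc]
    simp only [Fin.sum_univ_three]
    rw [hd, htr 0, htr 1, htr 2, hc0, hc1, hc2, hA 0 0, hA 0 1, hA 0 2]
    simp only [Fin.sum_univ_three] at hdiv
    have k21 := hdbι 2 1
    have k12 := hdbι 1 2
    simp only [Fin.sum_univ_three] at k21 k12
    norm_num at k21 k12
    -- orient second derivatives
    rw [hsw 2 et (eb 1), hsw 1 et (eb 2), hsw 2 (eb 0) (eb 1), hsw 1 (eb 0) (eb 2),
      hsw 2 (eb 2) (eb 1), hsw 1 (eb 1) (eb 2)]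
    simp only [Fin.reduceEq, if_false, if_true, reduceIte] at k21 k12
    linear_combination k21 - k12
      - (fderiv ℝ (fun z => v z 2) (t, x) (eb 1) - fderiv ℝ (fun z => v z 1) (t, x) (eb 2)) * hdiv
      - ι * (hswp (eb 1) (eb 2))
  · -- component 1
    have hd : deriv (fun s => curl (fun y => v (s, y)) x 1) t
        = fderiv ℝ (fun z' => fderiv ℝ (fun z => v z 0) z' (eb 2)) (t, x) et
          - fderiv ℝ (fun z' => fderiv ℝ (fun z => v z 2) z' (eb 0)) (t, x) et := by
      have h1 : (fun s => curl (fun y => v (s, y)) x 1)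
          = fun s => pd 2 (fun y => v (s, y) 0) x - pd 0 (fun y => v (s, y) 2) x := by
        funext s; simp [curl]
      rw [h1]
      exact deriv_curlcomp hB (hF 0) (hF 2) hx 2 0
    have htr : ∀ j : Fin 3, pd j (fun y => curl (fun w => v (t, w)) y 1) x
        = fderiv ℝ (fun z' => fderiv ℝ (fun z => v z 0) z' (eb 2)) (t, x) (eb j)
          - fderiv ℝ (fun z' => fderiv ℝ (fun z => v z 2) z' (eb 0)) (t, x) (eb j) := by
      intro j
      have h1 : (fun y => curl (fun w => v (t, w)) y 1)
          = fun y => pd 2 (fun w => v (t, w) 0) y - pd 0 (fun w => v (t, w) 2) y := by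
        funext y; simp [curl]
      rw [h1]
      exact pd_curlcomp hB (hF 0) (hF 2) hx 2 0 j
    have hE1 : pd 2 (fun y => ∑ j, pd j (fun w => E (t, w) 0 j) y) x
        = ∑ j, fderiv ℝ (fun z' => fderiv ℝ (fun z => E z 0 j) z' (eb j)) (t, x) (eb 2) :=
      pd_divcomp hB hx (fun j => hG 0 j) 2
    have hE2 : pd 0 (fun y => ∑ j, pd j (fun w => E (t, w) 2 j) y) x
        = ∑ j, fderiv ℝ (fun z' => fderiv ℝ (fun z => E z 2 j) z' (eb j)) (t, x) (eb 0) :=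
      pd_divcomp hB hx (fun j => hG 2 j) 0
    have hEc : curl (fun y => fun i' => ∑ j, pd j (fun w => E (t, w) i' j) y) x 1
        = (∑ j, fderiv ℝ (fun z' => fderiv ℝ (fun z => E z 0 j) z' (eb j)) (t, x) (eb 2))
          - ∑ j, fderiv ℝ (fun z' => fderiv ℝ (fun z => E z 2 j) z' (eb j)) (t, x) (eb 0) := by
      have h1 : curl (fun y => fun i' => ∑ j, pd j (fun w => E (t, w) i' j) y) x 1
          = pd 2 (fun y => ∑ j, pd j (fun w => E (t, w) 0 j) y) x
            - pd 0 (fun y => ∑ j, pd j (fun w => E (t, w) 2 j) y) x := by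
        simp [curl]
      rw [h1, hE1, hE2]
    have hc0 : curl (fun y => v (t, y)) x 0
        = fderiv ℝ (fun z => v z 2) (t, x) (eb 1) - fderiv ℝ (fun z => v z 1) (t, x) (eb 2) := by
      simp only [curl, Matrix.cons_val_zero]; rw [hA 2 1, hA 1 2]
    have hc1 : curl (fun y => v (t, y)) x 1
        = fderiv ℝ (fun z => v z 0) (t, x) (eb 2) - fderiv ℝ (fun z => v z 2) (t, x) (eb 0) := by
      simp only [curl, Matrix.cons_val_one, Matrix.head_cons, Matrix.cons_val_zero]; rw [hA 0 2, hA 2 0]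
    have hc2 : curl (fun y => v (t, y)) x 2
        = fderiv ℝ (fun z => v z 1) (t, x) (eb 0) - fderiv ℝ (fun z => v z 0) (t, x) (eb 1) := by
      simp only [curl]; rw [show ((2:Fin 3)) = 2 from rfl]
      simp only [Matrix.cons_val_two, Matrix.tail_cons, Matrix.head_cons]
      rw [hA 1 0, hA 0 1]
    simp only [Fin.mk_one]
    rw [hEc]
    simp only [Fin.sum_univ_three]
    rw [hd, htr 0, htr 1, htr 2, hc0, hc1, hc2, hA 1 0, hA 1 1, hA 1 2]
    simp only [Fin.sum_univ_three] at hdiv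
    have k21 := hdbι 0 2
    have k12 := hdbι 2 0
    simp only [Fin.sum_univ_three] at k21 k12
    norm_num at k21 k12
    simp only [Fin.reduceEq, if_false, if_true, reduceIte] at k21 k12
    rw [hsw 0 et (eb 2), hsw 2 et (eb 0), hsw 0 (eb 0) (eb 2), hsw 0 (eb 1) (eb 2),
      hsw 2 (eb 1) (eb 0), hsw 2 (eb 2) (eb 0)]
    linear_combination k21 - k12
      - (fderiv ℝ (fun z => v z 0) (t, x) (eb 2) - fderiv ℝ (fun z => v z 2) (t, x) (eb 0)) * hdiv
      - ι * (hswp (eb 2) (eb 0))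
  · -- component 2
    have hd : deriv (fun s => curl (fun y => v (s, y)) x 2) t
        = fderiv ℝ (fun z' => fderiv ℝ (fun z => v z 1) z' (eb 0)) (t, x) et
          - fderiv ℝ (fun z' => fderiv ℝ (fun z => v z 0) z' (eb 1)) (t, x) et := by
      have h1 : (fun s => curl (fun y => v (s, y)) x 2)
          = fun s => pd 0 (fun y => v (s, y) 1) x - pd 1 (fun y => v (s, y) 0) x := by
        funext s; simp [curl]
      rw [h1]
      exact deriv_curlcomp hB (hF 1) (hF 0) hx 0 1
    have htr : ∀ j : Fin 3, pd j (fun y => curl (fun w => v (t, w)) y 2) x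
        = fderiv ℝ (fun z' => fderiv ℝ (fun z => v z 1) z' (eb 0)) (t, x) (eb j)
          - fderiv ℝ (fun z' => fderiv ℝ (fun z => v z 0) z' (eb 1)) (t, x) (eb j) := by
      intro j
      have h1 : (fun y => curl (fun w => v (t, w)) y 2)
          = fun y => pd 0 (fun w => v (t, w) 1) y - pd 1 (fun w => v (t, w) 0) y := by
        funext y; simp [curl]
      rw [h1]
      exact pd_curlcomp hB (hF 1) (hF 0) hx 0 1 j
    have hE1 : pd 0 (fun y => ∑ j, pd j (fun w => E (t, w) 1 j) y) x
        = ∑ j, fderiv ℝ (fun z' => fderiv ℝ (fun z => E z 1 j) z' (eb j)) (t, x) (eb 0) :=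
      pd_divcomp hB hx (fun j => hG 1 j) 0
    have hE2 : pd 1 (fun y => ∑ j, pd j (fun w => E (t, w) 0 j) y) x
        = ∑ j, fderiv ℝ (fun z' => fderiv ℝ (fun z => E z 0 j) z' (eb j)) (t, x) (eb 1) :=
      pd_divcomp hB hx (fun j => hG 0 j) 1
    have hEc : curl (fun y => fun i' => ∑ j, pd j (fun w => E (t, w) i' j) y) x 2
        = (∑ j, fderiv ℝ (fun z' => fderiv ℝ (fun z => E z 1 j) z' (eb j)) (t, x) (eb 0))
          - ∑ j, fderiv ℝ (fun z' => fderiv ℝ (fun z => E z 0 j) z' (eb j)) (t, x) (eb 1) := by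
      have h1 : curl (fun y => fun i' => ∑ j, pd j (fun w => E (t, w) i' j) y) x 2
          = pd 0 (fun y => ∑ j, pd j (fun w => E (t, w) 1 j) y) x
            - pd 1 (fun y => ∑ j, pd j (fun w => E (t, w) 0 j) y) x := by
        simp [curl]
      rw [h1, hE1, hE2]
    have hc0 : curl (fun y => v (t, y)) x 0
        = fderiv ℝ (fun z => v z 2) (t, x) (eb 1) - fderiv ℝ (fun z => v z 1) (t, x) (eb 2) := by
      simp only [curl, Matrix.cons_val_zero]; rw [hA 2 1, hA 1 2]
    have hc1 : curl (fun y => v (t, y)) x 1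
        = fderiv ℝ (fun z => v z 0) (t, x) (eb 2) - fderiv ℝ (fun z => v z 2) (t, x) (eb 0) := by
      simp only [curl, Matrix.cons_val_one, Matrix.head_cons, Matrix.cons_val_zero]; rw [hA 0 2, hA 2 0]
    have hc2 : curl (fun y => v (t, y)) x 2
        = fderiv ℝ (fun z => v z 1) (t, x) (eb 0) - fderiv ℝ (fun z => v z 0) (t, x) (eb 1) := by
      simp only [curl]; rw [show ((2:Fin 3)) = 2 from rfl]
      simp only [Matrix.cons_val_two, Matrix.tail_cons, Matrix.head_cons]
      rw [hA 1 0, hA 0 1]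
    simp only [show (⟨2, by omega⟩ : Fin 3) = 2 from rfl]
    rw [hEc]
    simp only [Fin.sum_univ_three]
    rw [hd, htr 0, htr 1, htr 2, hc0, hc1, hc2, hA 2 0, hA 2 1, hA 2 2]
    simp only [Fin.sum_univ_three] at hdiv
    have k21 := hdbι 1 0
    have k12 := hdbι 0 1
    simp only [Fin.sum_univ_three] at k21 k12
    norm_num at k21 k12
    simp only [Fin.reduceEq, if_false, if_true, reduceIte] at k21 k12
    rw [hsw 1 et (eb 0), hsw 0 et (eb 1), hsw 1 (eb 1) (eb 0), hsw 1 (eb 2) (eb 0),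
      hsw 0 (eb 0) (eb 1), hsw 0 (eb 2) (eb 1)]
    linear_combination k21 - k12
      - (fderiv ℝ (fun z => v z 1) (t, x) (eb 0) - fderiv ℝ (fun z => v z 0) (t, x) (eb 1)) * hdiv
      - ι * (hswp (eb 0) (eb 1))
end
end

section
/- Conservation criterion for vorticity in two-dimensional incompressible flows of complex fluids: let B ⊆ ℝ³ be open, ρ₀ > 0 a constant, and let v : ℝ × B → ℝ³, p : ℝ × B → ℝ, E : ℝ × B → ℝ^{3×3} be smooth time-dependent fields with div v(t,·) = 0 for every t, satisfying the momentum balance ρ₀(∂_t v + (Dv)v) = div(−p I − E), with the third component of v vanishing identically and v, p, E independent of the third spatial coordinate x₃. If there exists a smooth scalar field π : ℝ × B → ℝ such that grad π(t,·) = div E(t,·) for every t, then the vorticity ω = curl v is materially conserved: ∂_t ω + (v·grad)ω = 0 at every point. -/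
noncomputable section

theorem pd_slice {f : ℝ × V3 → ℝ} {t : ℝ} {x : V3}
    (hf : DifferentiableAt ℝ f (t, x)) (j : Fin 3) :
    pd j (fun y => f (t, y)) x = fderiv ℝ f (t, x) (0, Pi.single j 1) := by
  have h : HasFDerivAt (fun y : V3 => f (t, y))
      ((fderiv ℝ f (t, x)).comp ((0 : V3 →L[ℝ] ℝ).prod (ContinuousLinearMap.id ℝ V3))) x :=
    hf.hasFDerivAt.comp x ((hasFDerivAt_const t x).prodMk (hasFDerivAt_id x))
  rw [pd, h.fderiv]
  simp

theorem deriv_slice {f : ℝ × V3 → ℝ} {t : ℝ} {x : V3}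
    (hf : DifferentiableAt ℝ f (t, x)) :
    deriv (fun s => f (s, x)) t = fderiv ℝ f (t, x) (1, 0) := by
  have h : HasDerivAt (fun s : ℝ => f (s, x)) (fderiv ℝ f (t, x) (1, (0 : V3))) t :=
    hf.hasFDerivAt.comp_hasDerivAt t ((hasDerivAt_id t).prodMk (hasDerivAt_const t x))
  exact h.deriv

theorem pd2_zero {f : V3 → ℝ}
    (hf : ∀ (y : V3) (s : ℝ), f (y + s • (Pi.single 2 1 : V3)) = f y) (y : V3) :
    pd 2 f y = 0 := by
  by_cases h : DifferentiableAt ℝ f y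
  · have hy : y + (0 : ℝ) • (Pi.single 2 1 : V3) = y := by simp
    have hline : HasDerivAt (fun s : ℝ => y + s • (Pi.single 2 1 : V3))
        (Pi.single 2 1 : V3) 0 := by
      simpa using ((hasDerivAt_id (0 : ℝ)).smul_const (Pi.single 2 1 : V3)).const_add y
    have h2 : HasDerivAt (fun s : ℝ => f (y + s • (Pi.single 2 1 : V3)))
        (fderiv ℝ f y (Pi.single 2 1)) 0 := by
      have hf' : HasFDerivAt f (fderiv ℝ f y) (y + (0 : ℝ) • (Pi.single 2 1 : V3)) := by
        rw [hy]; exact h.hasFDerivAt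
      exact hf'.comp_hasDerivAt 0 hline
    have h3 : (fun s : ℝ => f (y + s • (Pi.single 2 1 : V3))) = fun _ => f y :=
      funext fun s => hf y s
    rw [h3] at h2
    have := h2.unique (hasDerivAt_const 0 (f y))
    simpa [pd] using this
  · simp [pd, fderiv_zero_of_not_differentiableAt h]

theorem diffAt_of_cd {f : ℝ × V3 → ℝ} {U : Set (ℝ × V3)} (hU : IsOpen U)
    (hf : ContDiffOn ℝ (⊤ : ℕ∞) f U) {z : ℝ × V3} (hz : z ∈ U) :
    DifferentiableAt ℝ f z :=
  (hf.contDiffAt (hU.mem_nhds hz)).differentiableAt (by simp)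

theorem hasFDerivAt_fderiv_apply {f : ℝ × V3 → ℝ} {U : Set (ℝ × V3)} (hU : IsOpen U)
    (hf : ContDiffOn ℝ (⊤ : ℕ∞) f U) {z : ℝ × V3} (hz : z ∈ U) (u : ℝ × V3) :
    HasFDerivAt (fun z' => fderiv ℝ f z' u) ((fderiv ℝ (fderiv ℝ f) z).flip u) z := by
  have hd : DifferentiableAt ℝ (fderiv ℝ f) z := by
    have := (hf.contDiffAt (hU.mem_nhds hz)).fderiv_right (m := 1) (by norm_cast)
    exact this.differentiableAt (by simp)
  have := hd.hasFDerivAt.clm_apply (hasFDerivAt_const u z)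
  simpa using this

theorem symm2 {f : ℝ × V3 → ℝ} {U : Set (ℝ × V3)} (hU : IsOpen U)
    (hf : ContDiffOn ℝ (⊤ : ℕ∞) f U) {z : ℝ × V3} (hz : z ∈ U) (a b : ℝ × V3) :
    fderiv ℝ (fderiv ℝ f) z a b = fderiv ℝ (fderiv ℝ f) z b a :=
  ((hf.contDiffAt (hU.mem_nhds hz)).isSymmSndFDerivAt (by rw [minSmoothness_of_isRCLikeNormedField]; exact WithTop.coe_le_coe.mpr (le_top : (2:ℕ∞) ≤ ⊤))) a b

/-- conservation criterion for vorticity in two-dimensional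
incompressible flows of complex fluids. Under the hypotheses of the
two-dimensional vorticity transport theorem, if there exists a smooth scalar
field `π` with `grad π(t,·) = div E(t,·)`, then the vorticity is materially
conserved: `∂_t ω + (v·grad)ω = 0` (componentwise) at every point. -/
theorem twoDimensional_vorticity_conservation_criterion
    (B : Set V3) (hB : IsOpen B)
    (ρ₀ : ℝ) (hρ₀ : 0 < ρ₀)
    (v : ℝ × V3 → V3) (p : ℝ × V3 → ℝ) (E : ℝ × V3 → Fin 3 → Fin 3 → ℝ)
    (hv : ContDiffOn ℝ (⊤ : ℕ∞) v (Set.univ ×ˢ B))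
    (hp : ContDiffOn ℝ (⊤ : ℕ∞) p (Set.univ ×ˢ B))
    (hE : ContDiffOn ℝ (⊤ : ℕ∞) E (Set.univ ×ˢ B))
    (hincomp : ∀ t : ℝ, ∀ x ∈ B, (∑ j, pd j (fun y => v (t, y) j) x) = 0)
    (balance : ∀ t : ℝ, ∀ x ∈ B, ∀ i : Fin 3,
      ρ₀ * (deriv (fun s => v (s, x) i) t
              + ∑ j, pd j (fun y => v (t, y) i) x * v (t, x) j)
        = ∑ j, pd j (fun y => -(p (t, y)) * (if i = j then (1:ℝ) else 0) - E (t, y) i j) x)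
    (h2d : ∀ t : ℝ, ∀ x : V3, v (t, x) 2 = 0)
    (hv3 : ∀ t : ℝ, ∀ x y : V3, x 0 = y 0 → x 1 = y 1 → v (t, x) = v (t, y))
    (hp3 : ∀ t : ℝ, ∀ x y : V3, x 0 = y 0 → x 1 = y 1 → p (t, x) = p (t, y))
    (hE3 : ∀ t : ℝ, ∀ x y : V3, x 0 = y 0 → x 1 = y 1 → E (t, x) = E (t, y))
    (π : ℝ × V3 → ℝ)
    (hπ : ContDiffOn ℝ (⊤ : ℕ∞) π (Set.univ ×ˢ B))
    (hgradπ : ∀ t : ℝ, ∀ x ∈ B, ∀ i : Fin 3,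
      pd i (fun y => π (t, y)) x = ∑ j, pd j (fun w => E (t, w) i j) x) :
    ∀ t : ℝ, ∀ x ∈ B, ∀ i : Fin 3,
      deriv (fun s => curl (fun y => v (s, y)) x i) t
        + (∑ j, v (t, x) j * pd j (fun y => curl (fun w => v (t, w)) y i) x)
      = 0 := by
  set U : Set (ℝ × V3) := Set.univ ×ˢ B with hUdef
  have hU : IsOpen U := isOpen_univ.prod hB
  have hvC : ∀ i : Fin 3, ContDiffOn ℝ (⊤ : ℕ∞) (fun z : ℝ × V3 => v z i) U := fun i =>
    (ContinuousLinearMap.proj (R := ℝ) (φ := fun _ : Fin 3 => ℝ) i).contDiff.comp_contDiffOn hv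
  have hEC : ∀ i j : Fin 3, ContDiffOn ℝ (⊤ : ℕ∞) (fun z : ℝ × V3 => E z i j) U := fun i j =>
    ((ContinuousLinearMap.proj (R := ℝ) (φ := fun _ : Fin 3 => ℝ) j).contDiff.comp
      (ContinuousLinearMap.proj (R := ℝ) (φ := fun _ : Fin 3 => Fin 3 → ℝ) i).contDiff).comp_contDiffOn hE
  have hqC : ContDiffOn ℝ (⊤ : ℕ∞) (fun z : ℝ × V3 => p z + π z) U := hp.add hπ
  -- derivatives in x₂ direction of v-components vanish everywhere
  have hz2 : ∀ (t' : ℝ) (c : Fin 3) (y : V3), pd 2 (fun w => v (t', w) c) y = 0 := by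
    intro t' c y
    apply pd2_zero
    intro y' s
    have hx0 : (y' + s • (Pi.single 2 1 : V3)) 0 = y' 0 := by
      simp [Pi.single_apply]
    have hx1 : (y' + s • (Pi.single 2 1 : V3)) 1 = y' 1 := by
      simp [Pi.single_apply]
    exact congrFun (hv3 t' _ y' hx0 hx1) c
  -- components 0 and 1 of the vorticity vanish identically
  have hc0 : ∀ (t' : ℝ) (y : V3), curl (fun w => v (t', w)) y 0 = 0 := by
    intro t' y
    have h1 : (fun w : V3 => v (t', w) 2) = fun _ => (0 : ℝ) := funext fun w => h2d t' w
    simp only [curl, Matrix.cons_val_zero]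
    rw [h1, hz2 t' 1 y]
    simp [pd]
  have hc1 : ∀ (t' : ℝ) (y : V3), curl (fun w => v (t', w)) y 1 = 0 := by
    intro t' y
    have h1 : (fun w : V3 => v (t', w) 2) = fun _ => (0 : ℝ) := funext fun w => h2d t' w
    simp only [curl, Matrix.cons_val_one, Matrix.head_cons]
    rw [h1, hz2 t' 0 y]
    simp [pd]
  -- the momentum balance in joint-fderiv form
  have key : ∀ (i : Fin 3), ∀ z : ℝ × V3, z ∈ U →
      ρ₀ * (fderiv ℝ (fun w => v w i) z (1, (0 : V3))
        + fderiv ℝ (fun w => v w i) z ((0 : ℝ), Pi.single 0 1) * v z 0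
        + fderiv ℝ (fun w => v w i) z ((0 : ℝ), Pi.single 1 1) * v z 1)
        + fderiv ℝ (fun w => p w + π w) z ((0 : ℝ), Pi.single i 1) = 0 := by
    rintro i ⟨t', x'⟩ hz
    have hx' : x' ∈ B := hz.2
    have hb := balance t' x' hx' i
    rw [Fin.sum_univ_three, Fin.sum_univ_three] at hb
    have hvi := diffAt_of_cd hU (hvC i) hz
    have hpD := diffAt_of_cd hU hp hz
    have hπD := diffAt_of_cd hU hπ hz
    have hemb : DifferentiableAt ℝ (fun y : V3 => ((t', y) : ℝ × V3)) x' :=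
      (differentiableAt_const t').prodMk differentiableAt_id
    have hps : DifferentiableAt ℝ (fun y => p (t', y)) x' := hpD.comp x' hemb
    have hπs : DifferentiableAt ℝ (fun y => π (t', y)) x' := hπD.comp x' hemb
    have hEs : ∀ j : Fin 3, DifferentiableAt ℝ (fun y => E (t', y) i j) x' := fun j =>
      (diffAt_of_cd hU (hEC i j) hz).comp x' hemb
    rw [deriv_slice hvi, pd_slice hvi 0, pd_slice hvi 1, pd_slice hvi 2, h2d t' x'] at hb
    have hR : ∀ j : Fin 3,
        pd j (fun y => -(p (t', y)) * (if i = j then (1:ℝ) else 0) - E (t', y) i j) x'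
        = -(if i = j then (1:ℝ) else 0) * pd j (fun y => p (t', y)) x'
          - pd j (fun y => E (t', y) i j) x' := by
      intro j
      have h1 : DifferentiableAt ℝ (fun y => -(p (t', y)) * (if i = j then (1:ℝ) else 0)) x' :=
        hps.neg.mul_const _
      simp only [pd, fderiv_fun_sub h1 (hEs j), fderiv_mul_const hps.neg, fderiv_fun_neg]
      rcases eq_or_ne i j with hij | hij <;> simp [hij, smul_eq_mul] <;> try ring
    rw [hR 0, hR 1, hR 2] at hb
    have hg := hgradπ t' x' hx' i
    rw [Fin.sum_univ_three] at hg
    have hqs : pd i (fun y => p (t', y) + π (t', y)) x'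
        = pd i (fun y => p (t', y)) x' + pd i (fun y => π (t', y)) x' := by
      simp only [pd, fderiv_fun_add hps hπs]
      simp
    have hq2 : fderiv ℝ (fun w : ℝ × V3 => p w + π w) (t', x') ((0 : ℝ), Pi.single i 1)
        = pd i (fun y => p (t', y) + π (t', y)) x' :=
      (pd_slice (hpD.add hπD) i).symm
    rw [hq2, hqs]
    -- resolve the Kronecker deltas via cases on i
    fin_cases i <;>
      [skip; skip; skip] <;>
      simp only [Fin.zero_eta, Fin.mk_one, Fin.reduceFinMk, Fin.isValue, show ((0:Fin 3)=0) = True by simp, show ((0:Fin 3)=1) = False by simp,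
        show ((0:Fin 3)=2) = False by simp, show ((1:Fin 3)=0) = False by simp,
        show ((1:Fin 3)=1) = True by simp, show ((1:Fin 3)=2) = False by simp,
        show ((2:Fin 3)=0) = False by simp, show ((2:Fin 3)=1) = False by simp,
        show ((2:Fin 3)=2) = True by simp, if_true, if_false] at hb hg ⊢ <;>
      linear_combination hb + hg
  intro t x hx i
  have hz0 : ((t, x) : ℝ × V3) ∈ U := ⟨trivial, hx⟩
  have hzs : ∀ s : ℝ, ((s, x) : ℝ × V3) ∈ U := fun s => ⟨trivial, hx⟩
  fin_cases i
  · -- component 0 of the vorticity vanishes identically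
    simp only [Fin.zero_eta]
    rw [show (fun s => curl (fun y => v (s, y)) x 0) = fun _ => (0:ℝ) from
      funext fun s => hc0 s x]
    rw [show (fun y => curl (fun w => v (t, w)) y 0) = fun _ => (0:ℝ) from
      funext fun y => hc0 t y]
    simp [pd]
  · -- component 1 of the vorticity vanishes identically
    simp only [Fin.mk_one]
    rw [show (fun s => curl (fun y => v (s, y)) x 1) = fun _ => (0:ℝ) from
      funext fun s => hc1 s x]
    rw [show (fun y => curl (fun w => v (t, w)) y 1) = fun _ => (0:ℝ) from
      funext fun y => hc1 t y]
    simp [pd]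
  · -- main case: component 2
    simp only [Fin.reduceFinMk]
    have hA : deriv (fun s => curl (fun y => v (s, y)) x 2) t
        = fderiv ℝ (fderiv ℝ (fun z : ℝ × V3 => v z 1)) (t, x) (1, (0:V3)) ((0:ℝ), Pi.single 0 1)
          - fderiv ℝ (fderiv ℝ (fun z : ℝ × V3 => v z 0)) (t, x) (1, (0:V3)) ((0:ℝ), Pi.single 1 1) := by
      have hrw : (fun s => curl (fun y => v (s, y)) x 2)
          = fun s => fderiv ℝ (fun z : ℝ × V3 => v z 1) (s, x) ((0:ℝ), Pi.single 0 1)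
              - fderiv ℝ (fun z : ℝ × V3 => v z 0) (s, x) ((0:ℝ), Pi.single 1 1) := by
        funext s
        have h1 := pd_slice (f := fun z : ℝ × V3 => v z 1) (diffAt_of_cd hU (hvC 1) (hzs s)) 0
        have h0 := pd_slice (f := fun z : ℝ × V3 => v z 0) (diffAt_of_cd hU (hvC 0) (hzs s)) 1
        simp only [curl, Matrix.cons_val_two, Matrix.tail_cons, Matrix.head_cons]
        rw [h1, h0]
      rw [hrw]
      have hDer : HasDerivAt (fun s : ℝ =>
            fderiv ℝ (fun z : ℝ × V3 => v z 1) (s, x) ((0:ℝ), Pi.single 0 1)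
            - fderiv ℝ (fun z : ℝ × V3 => v z 0) (s, x) ((0:ℝ), Pi.single 1 1))
          (((fderiv ℝ (fderiv ℝ (fun z : ℝ × V3 => v z 1)) (t, x)).flip ((0:ℝ), Pi.single 0 1)
            - (fderiv ℝ (fderiv ℝ (fun z : ℝ × V3 => v z 0)) (t, x)).flip ((0:ℝ), Pi.single 1 1))
            (1, (0:V3))) t := by
        have := ((hasFDerivAt_fderiv_apply hU (hvC 1) hz0 ((0:ℝ), Pi.single 0 1)).fun_sub
          (hasFDerivAt_fderiv_apply hU (hvC 0) hz0 ((0:ℝ), Pi.single 1 1))).comp_hasDerivAt t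
          ((hasDerivAt_id t).prodMk (hasDerivAt_const t x))
        exact this
      rw [hDer.deriv]
      simp
    have hBj : ∀ jj : Fin 3, pd jj (fun y => curl (fun w => v (t, w)) y 2) x
        = fderiv ℝ (fderiv ℝ (fun z : ℝ × V3 => v z 1)) (t, x) ((0:ℝ), Pi.single jj 1) ((0:ℝ), Pi.single 0 1)
          - fderiv ℝ (fderiv ℝ (fun z : ℝ × V3 => v z 0)) (t, x) ((0:ℝ), Pi.single jj 1) ((0:ℝ), Pi.single 1 1) := by
      intro jj
      have hev : (fun y => curl (fun w => v (t, w)) y 2) =ᶠ[nhds x]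
          (fun y => fderiv ℝ (fun z : ℝ × V3 => v z 1) (t, y) ((0:ℝ), Pi.single 0 1)
            - fderiv ℝ (fun z : ℝ × V3 => v z 0) (t, y) ((0:ℝ), Pi.single 1 1)) := by
        filter_upwards [hB.mem_nhds hx] with y hy
        have h1 := pd_slice (f := fun z : ℝ × V3 => v z 1)
          (diffAt_of_cd hU (hvC 1) (⟨trivial, hy⟩ : ((t, y) : ℝ × V3) ∈ U)) 0
        have h0 := pd_slice (f := fun z : ℝ × V3 => v z 0)
          (diffAt_of_cd hU (hvC 0) (⟨trivial, hy⟩ : ((t, y) : ℝ × V3) ∈ U)) 1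
        simp only [curl, Matrix.cons_val_two, Matrix.tail_cons, Matrix.head_cons]
        rw [h1, h0]
      have hΦ := (hasFDerivAt_fderiv_apply hU (hvC 1) hz0 ((0:ℝ), Pi.single 0 1)).sub
        (hasFDerivAt_fderiv_apply hU (hvC 0) hz0 ((0:ℝ), Pi.single 1 1))
      have e1 : pd jj (fun y => curl (fun w => v (t, w)) y 2) x
          = pd jj (fun y => fderiv ℝ (fun z : ℝ × V3 => v z 1) (t, y) ((0:ℝ), Pi.single 0 1)
              - fderiv ℝ (fun z : ℝ × V3 => v z 0) (t, y) ((0:ℝ), Pi.single 1 1)) x := by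
        unfold pd; rw [hev.fderiv_eq]
      have e2 := pd_slice (f := fun z : ℝ × V3 =>
          fderiv ℝ (fun z' : ℝ × V3 => v z' 1) z ((0:ℝ), Pi.single 0 1)
          - fderiv ℝ (fun z' : ℝ × V3 => v z' 0) z ((0:ℝ), Pi.single 1 1)) hΦ.differentiableAt jj
      have e3 : fderiv ℝ (fun z : ℝ × V3 =>
          fderiv ℝ (fun z' : ℝ × V3 => v z' 1) z ((0:ℝ), Pi.single 0 1)
          - fderiv ℝ (fun z' : ℝ × V3 => v z' 0) z ((0:ℝ), Pi.single 1 1)) (t, x)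
          = (fderiv ℝ (fderiv ℝ (fun z : ℝ × V3 => v z 1)) (t, x)).flip ((0:ℝ), Pi.single 0 1)
            - (fderiv ℝ (fderiv ℝ (fun z : ℝ × V3 => v z 0)) (t, x)).flip ((0:ℝ), Pi.single 1 1) :=
        hΦ.fderiv
      rw [e1, e2, e3]
      simp
    have hdiv : fderiv ℝ (fun z : ℝ × V3 => v z 0) (t, x) ((0:ℝ), Pi.single 0 1)
        + fderiv ℝ (fun z : ℝ × V3 => v z 1) (t, x) ((0:ℝ), Pi.single 1 1) = 0 := by
      have h := hincomp t x hx
      rw [Fin.sum_univ_three] at h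
      rw [pd_slice (f := fun z : ℝ × V3 => v z 0) (diffAt_of_cd hU (hvC 0) hz0) 0,
        pd_slice (f := fun z : ℝ × V3 => v z 1) (diffAt_of_cd hU (hvC 1) hz0) 1] at h
      have h2 : pd 2 (fun y => v (t, y) 2) x = 0 := by
        rw [show (fun y : V3 => v (t, y) 2) = fun _ => (0:ℝ) from funext fun y => h2d t y]
        simp [pd]
      rw [h2] at h
      linarith
    have exp : ∀ (i : Fin 3) (w : ℝ × V3),
        ρ₀ * (fderiv ℝ (fderiv ℝ (fun z : ℝ × V3 => v z i)) (t, x) w (1, (0:V3))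
          + fderiv ℝ (fderiv ℝ (fun z : ℝ × V3 => v z i)) (t, x) w ((0:ℝ), Pi.single 0 1) * v (t, x) 0
          + fderiv ℝ (fun z : ℝ × V3 => v z i) (t, x) ((0:ℝ), Pi.single 0 1)
              * fderiv ℝ (fun z : ℝ × V3 => v z 0) (t, x) w
          + fderiv ℝ (fderiv ℝ (fun z : ℝ × V3 => v z i)) (t, x) w ((0:ℝ), Pi.single 1 1) * v (t, x) 1
          + fderiv ℝ (fun z : ℝ × V3 => v z i) (t, x) ((0:ℝ), Pi.single 1 1)
              * fderiv ℝ (fun z : ℝ × V3 => v z 1) (t, x) w)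
        + fderiv ℝ (fderiv ℝ (fun z : ℝ × V3 => p z + π z)) (t, x) w ((0:ℝ), Pi.single i 1) = 0 := by
      intro i w
      have m1 := hasFDerivAt_fderiv_apply hU (hvC i) hz0 (1, (0:V3))
      have m2 := (hasFDerivAt_fderiv_apply hU (hvC i) hz0 ((0:ℝ), Pi.single 0 1)).mul
        (diffAt_of_cd hU (hvC 0) hz0).hasFDerivAt
      have m3 := (hasFDerivAt_fderiv_apply hU (hvC i) hz0 ((0:ℝ), Pi.single 1 1)).mul
        (diffAt_of_cd hU (hvC 1) hz0).hasFDerivAt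
      have m4 := hasFDerivAt_fderiv_apply hU hqC hz0 ((0:ℝ), Pi.single i 1)
      have mΨ := ((m1.add (m2.add m3)).const_mul ρ₀).add m4
      have hcz : HasFDerivAt (fun z : ℝ × V3 =>
          ρ₀ * (fderiv ℝ (fun z' : ℝ × V3 => v z' i) z (1, (0:V3))
            + (fderiv ℝ (fun z' : ℝ × V3 => v z' i) z ((0:ℝ), Pi.single 0 1) * v z 0
              + fderiv ℝ (fun z' : ℝ × V3 => v z' i) z ((0:ℝ), Pi.single 1 1) * v z 1))
          + fderiv ℝ (fun z' : ℝ × V3 => p z' + π z') z ((0:ℝ), Pi.single i 1))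
          (0 : ℝ × V3 →L[ℝ] ℝ) (t, x) := by
        apply (hasFDerivAt_const (0:ℝ) ((t, x) : ℝ × V3)).congr_of_eventuallyEq
        filter_upwards [hU.mem_nhds hz0] with z hz
        linear_combination key i z hz
      have hDeq := mΨ.unique hcz
      have happ := DFunLike.congr_fun hDeq w
      simp only [ContinuousLinearMap.add_apply, ContinuousLinearMap.coe_smul', Pi.smul_apply,
        ContinuousLinearMap.flip_apply, ContinuousLinearMap.smul_apply,
        ContinuousLinearMap.zero_apply, smul_eq_mul] at happ
      linear_combination happ
    rw [Fin.sum_univ_three, hA, hBj 0, hBj 1, h2d t x]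
    have h1 := exp 1 ((0:ℝ), Pi.single 0 1)
    have h0 := exp 0 ((0:ℝ), Pi.single 1 1)
    rw [symm2 hU (hvC 1) hz0 ((0:ℝ), Pi.single 0 1) (1, (0:V3)),
      symm2 hU (hvC 1) hz0 ((0:ℝ), Pi.single 0 1) ((0:ℝ), Pi.single 1 1)] at h1
    rw [symm2 hU (hvC 0) hz0 ((0:ℝ), Pi.single 1 1) (1, (0:V3)),
      symm2 hU (hvC 0) hz0 ((0:ℝ), Pi.single 1 1) ((0:ℝ), Pi.single 0 1),
      symm2 hU hqC hz0 ((0:ℝ), Pi.single 1 1) ((0:ℝ), Pi.single 0 1)] at h0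
    apply mul_left_cancel₀ (ne_of_gt hρ₀)
    linear_combination h1 - h0
      - ρ₀ * (fderiv ℝ (fun z : ℝ × V3 => v z 1) (t, x) ((0:ℝ), Pi.single 0 1)
        - fderiv ℝ (fun z : ℝ × V3 => v z 0) (t, x) ((0:ℝ), Pi.single 1 1)) * hdiv
end
end
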